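/- For n > m ≥ 1 let Λ_{n,m} = ∏_{j=m}^{n−1} μ_j/λ_j. Then there exists a constant C > 0, independent of K, m, n, such that for all K > 1 and all n > m ≥ 1: | log Λ_{n,m} − (1/2)·log( (μ̃(m/K)·λ̃(n/K)) / (λ̃(m/K)·μ̃(n/K)) ) − K·( H(n/K) − H(m/K) ) | ≤ C/K. Equivalently, Λ_{n,m} = √( (μ_m/λ_m)·(λ_n/μ_n) )·exp( K·(H(n/K) − H(m/K)) + c(m,n,K)/K ) with sup_{m,n,K} |c(m,n,K)| < ∞. -/

import Mathlib

open Filter MeasureTheory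

noncomputable section


/-- Telescoping sum over `Ico`. -/
lemma tele_sum (f : ℕ → ℝ) {m n : ℕ} (h : m ≤ n) :
    ∑ j ∈ Finset.Ico m n, (f (j + 1) - f j) = f n - f m := by
  rw [Finset.sum_Ico_eq_sub _ h, Finset.sum_range_sub, Finset.sum_range_sub]
  ring

/-- Lower bound for arctan increments. -/
lemma arctan_step {a b : ℝ} (h0 : 0 ≤ a) (hab : a < b) :
    (b - a) / (1 + b ^ 2) ≤ Real.arctan b - Real.arctan a := by
  have hba : (0:ℝ) < b - a := by linarith
  obtain ⟨c, hc, hderiv⟩ := exists_deriv_eq_slope Real.arctan hab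
    (Real.continuous_arctan.continuousOn)
    (Real.differentiable_arctan.differentiableOn)
  rw [Real.deriv_arctan] at hderiv
  simp only [] at hderiv
  rw [eq_div_iff hba.ne'] at hderiv
  have hc1 : 0 < c := lt_of_le_of_lt h0 hc.1
  have hc2 : c < b := hc.2
  have hmono : (1:ℝ)/(1+b^2) ≤ 1/(1+c^2) :=
    one_div_le_one_div_of_le (by positivity) (by nlinarith)
  calc (b - a) / (1 + b ^ 2) = (1/(1+b^2)) * (b - a) := by ring
    _ ≤ (1/(1+c^2)) * (b - a) := mul_le_mul_of_nonneg_right hmono hba.le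
    _ = Real.arctan b - Real.arctan a := hderiv

/-- Riemann-sum style bound for the sum of `1/(1+(j/K)²)`. -/
lemma sum_arctan (K : ℝ) (hK : 0 < K) :
    ∀ n : ℕ, ∑ j ∈ Finset.Ico 1 n, 1 / (1 + ((j : ℝ) / K) ^ 2)
      ≤ K * Real.arctan (((n - 1 : ℕ) : ℝ) / K) := by
  intro n
  induction n with
  | zero => simp
  | succ n ih =>
    rcases Nat.eq_zero_or_pos n with hn | hn
    · subst hn; simp
    · rw [Finset.sum_Ico_succ_top hn]
      have hcast : ((n - 1 : ℕ) : ℝ) = (n : ℝ) - 1 := by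
        rw [Nat.cast_sub hn]; norm_num
      have h0 : (0:ℝ) ≤ ((n : ℝ) - 1) / K := by
        apply div_nonneg _ hK.le
        have : (1:ℝ) ≤ (n:ℝ) := by exact_mod_cast hn
        linarith
      have hab : ((n : ℝ) - 1) / K < (n : ℝ) / K := by
        apply div_lt_div_of_pos_right (by linarith) hK
      have hstep := arctan_step h0 hab
      have hdiff : (n:ℝ)/K - ((n:ℝ)-1)/K = 1/K := by ring
      rw [hdiff] at hstep
      have hf : 1 / (1 + ((n : ℝ) / K) ^ 2)
          ≤ K * (Real.arctan ((n : ℝ) / K) - Real.arctan (((n : ℝ) - 1) / K)) := by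
        have := mul_le_mul_of_nonneg_left hstep hK.le
        calc 1 / (1 + ((n : ℝ) / K) ^ 2) = K * ((1/K) / (1 + ((n:ℝ)/K)^2)) := by
              field_simp
          _ ≤ _ := this
      have hgoal : ((n + 1 - 1 : ℕ) : ℝ) = (n : ℝ) := by simp
      rw [hgoal]
      rw [hcast] at ih
      linarith [ih, hf]

/-- The sum of `1/(1+(j/K)²)` over `Ico m n` is at most `2K`. -/
lemma sum_bound {K : ℝ} (hK : 1 < K) {m n : ℕ} (hm : 1 ≤ m) :
    ∑ j ∈ Finset.Ico m n, 1 / (1 + ((j : ℝ) / K) ^ 2) ≤ 2 * K := by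
  have hK0 : (0:ℝ) < K := lt_trans one_pos hK
  have h1 : ∑ j ∈ Finset.Ico m n, 1/(1+((j:ℝ)/K)^2)
      ≤ ∑ j ∈ Finset.Ico 1 n, 1/(1+((j:ℝ)/K)^2) := by
    apply Finset.sum_le_sum_of_subset_of_nonneg (Finset.Ico_subset_Ico hm le_rfl)
    intro i _ _; positivity
  have h2 := sum_arctan K hK0 n
  have h3 : Real.arctan (((n-1:ℕ):ℝ)/K) ≤ Real.pi/2 := (Real.arctan_lt_pi_div_two _).le
  have hpi : Real.pi / 2 ≤ 2 := by linarith [Real.pi_le_four]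
  calc ∑ j ∈ Finset.Ico m n, 1/(1+((j:ℝ)/K)^2)
      ≤ K * Real.arctan (((n-1:ℕ):ℝ)/K) := le_trans h1 h2
    _ ≤ K * 2 := mul_le_mul_of_nonneg_left (le_trans h3 hpi) hK0.le
    _ = 2 * K := by ring


/-- Trapezoid-rule error estimate via two mean value inequalities. -/
lemma trap (F : ℝ → ℝ) (a b B : ℝ) (hab : a ≤ b) (hB : 0 ≤ B)
    (hd1 : ∀ x ∈ Set.Icc a b, DifferentiableAt ℝ F x)
    (hd2 : ∀ x ∈ Set.Icc a b, DifferentiableAt ℝ (deriv F) x)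
    (hd3 : ∀ x ∈ Set.Icc a b, DifferentiableAt ℝ (deriv (deriv F)) x)
    (hbd : ∀ x ∈ Set.Icc a b, |deriv (deriv (deriv F)) x| ≤ B) :
    |F b - F a - (b - a) / 2 * (deriv F a + deriv F b)| ≤ B * (b - a) ^ 3 / 2 := by
  set F1 := deriv F with hF1
  set F2 := deriv (deriv F) with hF2
  set F3 := deriv (deriv (deriv F)) with hF3
  have hconv : Convex ℝ (Set.Icc a b) := convex_Icc a b
  have hmema : a ∈ Set.Icc a b := Set.left_mem_Icc.2 hab
  have hmemb : b ∈ Set.Icc a b := Set.right_mem_Icc.2 hab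
  set ψ : ℝ → ℝ := fun t => (F1 t - F1 a) / 2 - (t - a) / 2 * F2 t with hψ
  have hψd : ∀ t ∈ Set.Icc a b,
      HasDerivWithinAt ψ (F2 t / 2 - ((1:ℝ) / 2 * F2 t + (t - a) / 2 * F3 t))
        (Set.Icc a b) t := by
    intro t ht
    have h1 : HasDerivAt F1 (F2 t) t := (hd2 t ht).hasDerivAt
    have h2 : HasDerivAt F2 (F3 t) t := (hd3 t ht).hasDerivAt
    have hlin : HasDerivAt (fun t : ℝ => (t - a) / 2) ((1:ℝ) / 2) t := by
      simpa using ((hasDerivAt_id t).sub_const a).div_const 2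
    exact (((h1.sub_const (F1 a)).div_const 2).sub (hlin.mul h2)).hasDerivWithinAt
  have hC1 : (0:ℝ) ≤ (b - a) / 2 * B := by
    apply mul_nonneg _ hB; linarith
  have hψbound : ∀ t ∈ Set.Icc a b,
      ‖F2 t / 2 - ((1:ℝ) / 2 * F2 t + (t - a) / 2 * F3 t)‖ ≤ (b - a) / 2 * B := by
    intro t ht
    have heq : F2 t / 2 - ((1:ℝ) / 2 * F2 t + (t - a) / 2 * F3 t)
        = -((t - a) / 2 * F3 t) := by ring
    rw [heq, Real.norm_eq_abs, abs_neg, abs_mul]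
    have ht1 : 0 ≤ t - a := by linarith [ht.1]
    have ht2 : t - a ≤ b - a := by linarith [ht.2]
    have habs : |(t - a) / 2| ≤ (b - a) / 2 := by
      rw [abs_of_nonneg (by linarith)]; linarith
    exact mul_le_mul habs (hbd t ht) (abs_nonneg _) (by linarith)
  have hψest : ∀ t ∈ Set.Icc a b, |ψ t| ≤ (b - a) / 2 * B * (b - a) := by
    intro t ht
    have h0 : ψ a = 0 := by simp [hψ]
    have := Convex.norm_image_sub_le_of_norm_hasDerivWithin_le hψd hψbound hconv hmema ht
    rw [h0, sub_zero, Real.norm_eq_abs, Real.norm_eq_abs] at this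
    have habs : |t - a| ≤ b - a := by
      rw [abs_of_nonneg (by linarith [ht.1])]; linarith [ht.2]
    calc |ψ t| ≤ (b - a) / 2 * B * |t - a| := this
      _ ≤ (b - a) / 2 * B * (b - a) := mul_le_mul_of_nonneg_left habs hC1
  set φ : ℝ → ℝ := fun t => F t - F a - (t - a) / 2 * (F1 a + F1 t) with hφ
  have hφd : ∀ t ∈ Set.Icc a b,
      HasDerivWithinAt φ (F1 t - ((1:ℝ) / 2 * (F1 a + F1 t) + (t - a) / 2 * F2 t))
        (Set.Icc a b) t := by
    intro t ht
    have h1 : HasDerivAt F (F1 t) t := (hd1 t ht).hasDerivAt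
    have h2 : HasDerivAt F1 (F2 t) t := (hd2 t ht).hasDerivAt
    have hlin : HasDerivAt (fun t : ℝ => (t - a) / 2) ((1:ℝ) / 2) t := by
      simpa using ((hasDerivAt_id t).sub_const a).div_const 2
    exact ((h1.sub_const (F a)).sub (hlin.mul (h2.const_add (F1 a)))).hasDerivWithinAt
  have hφbound : ∀ t ∈ Set.Icc a b,
      ‖F1 t - ((1:ℝ) / 2 * (F1 a + F1 t) + (t - a) / 2 * F2 t)‖
        ≤ (b - a) / 2 * B * (b - a) := by
    intro t ht
    have heq : F1 t - ((1:ℝ) / 2 * (F1 a + F1 t) + (t - a) / 2 * F2 t) = ψ t := by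
      simp only [hψ]; ring
    rw [heq, Real.norm_eq_abs]
    exact hψest t ht
  have hfinal := Convex.norm_image_sub_le_of_norm_hasDerivWithin_le hφd hφbound hconv hmema hmemb
  have h0 : φ a = 0 := by simp [hφ]
  rw [h0, sub_zero, Real.norm_eq_abs, Real.norm_eq_abs] at hfinal
  have habs : |b - a| = b - a := abs_of_nonneg (by linarith)
  rw [habs] at hfinal
  calc |φ b| ≤ (b - a) / 2 * B * (b - a) * (b - a) := hfinal
    _ = B * (b - a) ^ 3 / 2 := by ring

/-- Birth rate `λ_n = n · λ̃(n/K)`. -/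
def lamK (lam : ℝ → ℝ) (K : ℝ) (n : ℕ) : ℝ := (n : ℝ) * lam ((n : ℝ) / K)

/-- Death rate `μ_n = n · μ̃(n/K)`. -/
def muK (mu : ℝ → ℝ) (K : ℝ) (n : ℕ) : ℝ := (n : ℝ) * mu ((n : ℝ) / K)

/-- The weights `π_n = (λ₁⋯λ_{n-1})/(μ₁⋯μ_n)` (so `π₁ = 1/μ₁`). -/
def pik (lam mu : ℝ → ℝ) (K : ℝ) (n : ℕ) : ℝ :=
  (∏ j ∈ Finset.Icc 1 (n - 1), lamK lam K j) / (∏ j ∈ Finset.Icc 1 n, muK mu K j)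

/-- `H(x) = ∫_{x*}^x log (μ̃(s)/λ̃(s)) ds`. -/
def Hfun (lam mu : ℝ → ℝ) (xs : ℝ) (x : ℝ) : ℝ :=
  ∫ s in xs..x, Real.log (mu s / lam s)

/-- `u⁰_n = 1 + ∑_{j=1}^{n-1} 1/(λ_j π_j)`. -/
def u0 (lam mu : ℝ → ℝ) (K : ℝ) (n : ℕ) : ℝ :=
  1 + ∑ j ∈ Finset.Icc 1 (n - 1), 1 / (lamK lam K j * pik lam mu K j)

/-- Standing assumptions on the rate functions. -/
structure SA (lam mu : ℝ → ℝ) (xs : ℝ) : Prop where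
  lam_pos : ∀ x : ℝ, 0 ≤ x → 0 < lam x
  mu_pos : ∀ x : ℝ, 0 ≤ x → 0 < mu x
  lam_diff : DifferentiableOn ℝ lam (Set.Ici (0 : ℝ))
  mu_diff : DifferentiableOn ℝ mu (Set.Ici (0 : ℝ))
  lam_mono : MonotoneOn lam (Set.Ici (0 : ℝ))
  mu_mono : MonotoneOn mu (Set.Ici (0 : ℝ))
  xs_pos : 0 < xs
  lam_eq_mu_xs : lam xs = mu xs
  xs_unique : ∀ x : ℝ, 0 < x → lam x = mu x → x = xs
  logratio_mono : MonotoneOn (fun x : ℝ => Real.log (mu x / lam x)) (Set.Ici (0 : ℝ))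
  H_d1 : ∀ x : ℝ, 0 ≤ x → DifferentiableAt ℝ (Hfun lam mu xs) x
  H_d2 : ∀ x : ℝ, 0 ≤ x → DifferentiableAt ℝ (deriv (Hfun lam mu xs)) x
  H_d3 : ∀ x : ℝ, 0 ≤ x → DifferentiableAt ℝ (deriv (deriv (Hfun lam mu xs))) x
  H3_bdd : ∃ M : ℝ, ∀ x : ℝ, 0 ≤ x →
    (1 + x ^ 2) * |deriv (deriv (deriv (Hfun lam mu xs))) x| ≤ M


lemma deriv_Hfun (lam mu : ℝ → ℝ) (xs : ℝ) (hSA : SA lam mu xs) (x : ℝ) (hx : 0 < x) :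
    deriv (Hfun lam mu xs) x = Real.log (mu x / lam x) := by
  set g : ℝ → ℝ := fun s => Real.log (mu s / lam s) with hg
  have hgc : ContinuousOn g (Set.Ici (0:ℝ)) := by
    apply ContinuousOn.log
    · exact (hSA.mu_diff.continuousOn).div (hSA.lam_diff.continuousOn)
        (fun y hy => (hSA.lam_pos y hy).ne')
    · intro y hy
      exact div_ne_zero (hSA.mu_pos y hy).ne' (hSA.lam_pos y hy).ne'
  have hgIoi : ContinuousOn g (Set.Ioi (0:ℝ)) := hgc.mono Set.Ioi_subset_Ici_self
  have hsub : Set.uIcc xs x ⊆ Set.Ici (0:ℝ) := by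
    intro y hy
    have h1 : min xs x ≤ y := hy.1
    have : (0:ℝ) ≤ min xs x := le_min hSA.xs_pos.le hx.le
    exact le_trans this h1
  have hint : IntervalIntegrable g MeasureTheory.volume xs x :=
    (hgc.mono hsub).intervalIntegrable
  have hmeas : StronglyMeasurableAtFilter g (nhds x) MeasureTheory.volume :=
    ContinuousOn.stronglyMeasurableAtFilter isOpen_Ioi hgIoi x hx
  have hcont : ContinuousAt g x := hgIoi.continuousAt (isOpen_Ioi.mem_nhds hx)
  have hD := intervalIntegral.integral_hasDerivAt_right hint hmeas hcont
  exact hD.deriv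


/-- Laplace-type estimate for `Λ_{n,m} = ∏_{j=m}^{n-1} μ_j/λ_j`. -/
theorem stmt_17 (lam mu : ℝ → ℝ) (xs : ℝ) (hSA : SA lam mu xs) :
    ∃ C : ℝ, 0 < C ∧ ∀ K : ℝ, 1 < K → ∀ m n : ℕ, 1 ≤ m → m < n →
      |Real.log (∏ j ∈ Finset.Ico m n, muK mu K j / lamK lam K j)
          - (1 / 2) * Real.log ((mu ((m : ℝ) / K) * lam ((n : ℝ) / K))
              / (lam ((m : ℝ) / K) * mu ((n : ℝ) / K)))
          - K * (Hfun lam mu xs ((n : ℝ) / K) - Hfun lam mu xs ((m : ℝ) / K))|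
        ≤ C / K := by
  obtain ⟨M, hM⟩ := hSA.H3_bdd
  have hM0 : (0:ℝ) ≤ M := le_trans (by positivity) (hM 0 le_rfl)
  refine ⟨M + 1, by positivity, ?_⟩
  intro K hK m n hm hmn
  have hK0 : (0:ℝ) < K := lt_trans one_pos hK
  set F := Hfun lam mu xs with hF
  have hpos : ∀ j : ℕ, 1 ≤ j → (0:ℝ) < (j:ℝ)/K := fun j hj =>
    div_pos (by exact_mod_cast hj) hK0
  have hF3 : ∀ x : ℝ, 0 ≤ x → |deriv (deriv (deriv F)) x| ≤ M / (1 + x^2) := by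
    intro x hx
    rw [le_div_iff₀ (by positivity)]
    linarith [hM x hx]
  -- Step A : logarithm of the product is a sum of values of deriv F
  have hprod : Real.log (∏ j ∈ Finset.Ico m n, muK mu K j / lamK lam K j)
      = ∑ j ∈ Finset.Ico m n, deriv F ((j:ℝ)/K) := by
    rw [Real.log_prod]
    · apply Finset.sum_congr rfl
      intro j hj
      have hj1 : 1 ≤ j := le_trans hm (Finset.mem_Ico.1 hj).1
      have hjne : ((j:ℝ)) ≠ 0 := by
        have : (0:ℝ) < (j:ℝ) := by exact_mod_cast hj1
        exact this.ne'
      rw [hF, deriv_Hfun lam mu xs hSA _ (hpos j hj1)]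
      congr 1
      unfold muK lamK
      exact mul_div_mul_left _ _ hjne
    · intro j hj
      have hj1 : 1 ≤ j := le_trans hm (Finset.mem_Ico.1 hj).1
      have hjR : (0:ℝ) < (j:ℝ) := by exact_mod_cast hj1
      have h1 : 0 < muK mu K j := mul_pos hjR (hSA.mu_pos _ (hpos j hj1).le)
      have h2 : 0 < lamK lam K j := mul_pos hjR (hSA.lam_pos _ (hpos j hj1).le)
      exact (div_pos h1 h2).ne'
  -- Step B : the boundary log term
  have hmn' : m ≤ n := hmn.le
  have hn1 : 1 ≤ n := le_trans hm hmn'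
  have hmK := hpos m hm
  have hnK := hpos n hn1
  have hlm : (0:ℝ) < lam ((m:ℝ)/K) := hSA.lam_pos _ hmK.le
  have hln : (0:ℝ) < lam ((n:ℝ)/K) := hSA.lam_pos _ hnK.le
  have hmm : (0:ℝ) < mu ((m:ℝ)/K) := hSA.mu_pos _ hmK.le
  have hmn2 : (0:ℝ) < mu ((n:ℝ)/K) := hSA.mu_pos _ hnK.le
  have hhalf : Real.log ((mu ((m:ℝ)/K) * lam ((n:ℝ)/K)) / (lam ((m:ℝ)/K) * mu ((n:ℝ)/K)))
      = deriv F ((m:ℝ)/K) - deriv F ((n:ℝ)/K) := by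
    rw [hF, deriv_Hfun lam mu xs hSA _ hmK, deriv_Hfun lam mu xs hSA _ hnK]
    rw [Real.log_div (mul_ne_zero hmm.ne' hln.ne') (mul_ne_zero hlm.ne' hmn2.ne'),
      Real.log_mul hmm.ne' hln.ne', Real.log_mul hlm.ne' hmn2.ne',
      Real.log_div hmm.ne' hlm.ne', Real.log_div hmn2.ne' hln.ne']
    ring
  -- telescoping identities
  have telF : ∑ j ∈ Finset.Ico m n, (F ((((j+1):ℕ):ℝ)/K) - F ((j:ℝ)/K))
      = F ((n:ℝ)/K) - F ((m:ℝ)/K) :=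
    tele_sum (fun j : ℕ => F ((j:ℝ)/K)) hmn'
  have telu : ∑ j ∈ Finset.Ico m n, (deriv F ((((j+1):ℕ):ℝ)/K) - deriv F ((j:ℝ)/K))
      = deriv F ((n:ℝ)/K) - deriv F ((m:ℝ)/K) :=
    tele_sum (fun j : ℕ => deriv F ((j:ℝ)/K)) hmn'
  -- trapezoid estimate on each step
  have hstep : ∀ j ∈ Finset.Ico m n,
      |(F ((((j+1):ℕ):ℝ)/K) - F ((j:ℝ)/K))
        - (1/K)/2 * (deriv F ((j:ℝ)/K) + deriv F ((((j+1):ℕ):ℝ)/K))|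
      ≤ M / (1 + ((j:ℝ)/K)^2) * (1/K)^3 / 2 := by
    intro j hj
    have hj1 : 1 ≤ j := le_trans hm (Finset.mem_Ico.1 hj).1
    have hjpos := hpos j hj1
    have hcast : (((j+1):ℕ):ℝ) = (j:ℝ)+1 := by push_cast; ring
    rw [hcast]
    have hab : (j:ℝ)/K ≤ ((j:ℝ)+1)/K := by
      gcongr
      linarith
    have hsub : Set.Icc ((j:ℝ)/K) (((j:ℝ)+1)/K) ⊆ Set.Ici (0:ℝ) :=
      fun x hx => le_trans hjpos.le hx.1
    have hB : (0:ℝ) ≤ M / (1 + ((j:ℝ)/K)^2) := by positivity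
    have hbd : ∀ x ∈ Set.Icc ((j:ℝ)/K) (((j:ℝ)+1)/K),
        |deriv (deriv (deriv F)) x| ≤ M / (1 + ((j:ℝ)/K)^2) := by
      intro x hx
      have hx0 : (0:ℝ) ≤ x := hsub hx
      refine le_trans (hF3 x hx0) ?_
      gcongr
      nlinarith [hx.1, hjpos.le]
    have htr := trap F ((j:ℝ)/K) (((j:ℝ)+1)/K) (M / (1 + ((j:ℝ)/K)^2)) hab hB
      (fun x hx => hSA.H_d1 x (hsub hx))
      (fun x hx => hSA.H_d2 x (hsub hx))
      (fun x hx => hSA.H_d3 x (hsub hx))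
      hbd
    have hba : ((j:ℝ)+1)/K - (j:ℝ)/K = 1/K := by ring
    rw [hba] at htr
    exact htr
  -- global estimate
  set S := ∑ j ∈ Finset.Ico m n,
      ((1/K)/2 * (deriv F ((j:ℝ)/K) + deriv F ((((j+1):ℕ):ℝ)/K))) with hS
  have hD : |S - (F ((n:ℝ)/K) - F ((m:ℝ)/K))| ≤ M / K^2 := by
    rw [hS, ← telF, ← Finset.sum_sub_distrib]
    have h1 : |∑ j ∈ Finset.Ico m n, ((1/K)/2 * (deriv F ((j:ℝ)/K) + deriv F ((((j+1):ℕ):ℝ)/K))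
        - (F ((((j+1):ℕ):ℝ)/K) - F ((j:ℝ)/K)))|
        ≤ ∑ j ∈ Finset.Ico m n, M / (1 + ((j:ℝ)/K)^2) * (1/K)^3 / 2 := by
      refine le_trans (Finset.abs_sum_le_sum_abs _ _) (Finset.sum_le_sum ?_)
      intro j hj
      rw [abs_sub_comm]
      exact hstep j hj
    refine le_trans h1 ?_
    have h2 : ∑ j ∈ Finset.Ico m n, M / (1 + ((j:ℝ)/K)^2) * (1/K)^3 / 2
        = (M * (1/K)^3 / 2) * ∑ j ∈ Finset.Ico m n, 1/(1 + ((j:ℝ)/K)^2) := by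
      rw [Finset.mul_sum]
      apply Finset.sum_congr rfl
      intro j _
      ring
    rw [h2]
    have h3 := sum_bound hK hm (n := n)
    calc (M * (1/K)^3 / 2) * ∑ j ∈ Finset.Ico m n, 1/(1 + ((j:ℝ)/K)^2)
        ≤ (M * (1/K)^3 / 2) * (2*K) := by
          apply mul_le_mul_of_nonneg_left h3 (by positivity)
      _ = M / K^2 := by field_simp
  have hKS : K * S = (∑ j ∈ Finset.Ico m n, deriv F ((j:ℝ)/K))
      + (1/2) * (deriv F ((n:ℝ)/K) - deriv F ((m:ℝ)/K)) := by
    rw [hS, Finset.mul_sum]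
    have h1 : ∀ j ∈ Finset.Ico m n,
        K * ((1/K)/2 * (deriv F ((j:ℝ)/K) + deriv F ((((j+1):ℕ):ℝ)/K)))
        = deriv F ((j:ℝ)/K) + (1/2) * (deriv F ((((j+1):ℕ):ℝ)/K) - deriv F ((j:ℝ)/K)) := by
      intro j _
      field_simp
      ring
    rw [Finset.sum_congr rfl h1, Finset.sum_add_distrib, ← Finset.mul_sum, telu]
  have keyeq : Real.log (∏ j ∈ Finset.Ico m n, muK mu K j / lamK lam K j)
      - (1 / 2) * Real.log ((mu ((m:ℝ)/K) * lam ((n:ℝ)/K)) / (lam ((m:ℝ)/K) * mu ((n:ℝ)/K)))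
      - K * (F ((n:ℝ)/K) - F ((m:ℝ)/K))
      = K * (S - (F ((n:ℝ)/K) - F ((m:ℝ)/K))) := by
    have hexp : K * (S - (F ((n:ℝ)/K) - F ((m:ℝ)/K)))
        = K * S - K * (F ((n:ℝ)/K) - F ((m:ℝ)/K)) := by ring
    rw [hprod, hhalf, hexp, hKS]
    ring
  rw [keyeq, abs_mul, abs_of_pos hK0]
  calc K * |S - (F ((n:ℝ)/K) - F ((m:ℝ)/K))| ≤ K * (M / K^2) :=
      mul_le_mul_of_nonneg_left hD hK0.le
    _ = M / K := by field_simp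
    _ ≤ (M+1) / K := by gcongr; linarith
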